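/- Let g ≥ 1 and τ = (τ_{ij}) ∈ M_g(ℂ) with det(Im τ) ≠ 0. If ρ(τ) < g, then F_τ is not an extension of ℚ of degree at most 4; that is, either F_τ is infinite-dimensional over ℚ or [F_τ : ℚ] ≥ 5. Equivalently, if F_τ is a finite extension of ℚ with [F_τ : ℚ] ≤ 4, then ρ(τ) ≥ g. -/

import Mathlib

open Matrix Module IntermediateField
open scoped ComplexOrder

set_option maxHeartbeats 1000000
set_option synthInstance.maxHeartbeats 400000

noncomputable section

/-- The period matrix `Π(τ) = (τ | I_g)`, a `g × 2g` complex matrix. -/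
def PeriodMatrix (g : ℕ) (τ : Matrix (Fin g) (Fin g) ℂ) :
    Matrix (Fin g) (Fin g ⊕ Fin g) ℂ :=
  Matrix.fromCols τ 1

/-- `F_τ`: the subfield of `ℂ` generated over `ℚ` by the entries of `τ`. -/
def EntryField (g : ℕ) (τ : Matrix (Fin g) (Fin g) ℂ) : IntermediateField ℚ ℂ :=
  IntermediateField.adjoin ℚ {x : ℂ | ∃ i j, τ i j = x}

/-- Entrywise inclusion `ℚ → ℂ` on square matrices, as an algebra homomorphism. -/
def mapQC (g : ℕ) : Matrix (Fin g) (Fin g) ℚ →ₐ[ℚ] Matrix (Fin g) (Fin g) ℂ :=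
  (Algebra.ofId ℚ ℂ).mapMatrix

/-- The ℚ-vector space `N(τ)` of triples `(A,B,C)` of rational `g × g` matrices with
`A, C` skew-symmetric and `A - Bτ + τᵗBᵗ + τᵗCτ = 0`; its dimension is the Picard
number of the complex torus `X_τ`. -/
def NSSpace (g : ℕ) (τ : Matrix (Fin g) (Fin g) ℂ) :
    Submodule ℚ (Matrix (Fin g) (Fin g) ℚ × Matrix (Fin g) (Fin g) ℚ ×
      Matrix (Fin g) (Fin g) ℚ) where
  carrier := {x | x.1ᵀ = -x.1 ∧ x.2.2ᵀ = -x.2.2 ∧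
    mapQC g x.1 - mapQC g x.2.1 * τ + τᵀ * (mapQC g x.2.1)ᵀ + τᵀ * mapQC g x.2.2 * τ = 0}
  add_mem' := by
    rintro a b ⟨ha1, ha2, ha3⟩ ⟨hb1, hb2, hb3⟩
    refine ⟨by simp [Matrix.transpose_add, ha1, hb1]; abel,
      by simp [Matrix.transpose_add, ha2, hb2]; abel, ?_⟩
    have key : mapQC g (a + b).1 - mapQC g (a + b).2.1 * τ + τᵀ * (mapQC g (a + b).2.1)ᵀ
        + τᵀ * mapQC g (a + b).2.2 * τ
        = (mapQC g a.1 - mapQC g a.2.1 * τ + τᵀ * (mapQC g a.2.1)ᵀ + τᵀ * mapQC g a.2.2 * τ)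
        + (mapQC g b.1 - mapQC g b.2.1 * τ + τᵀ * (mapQC g b.2.1)ᵀ
          + τᵀ * mapQC g b.2.2 * τ) := by
      simp only [Prod.fst_add, Prod.snd_add, map_add, Matrix.add_mul, Matrix.mul_add,
        Matrix.transpose_add]
      abel
    rw [key, ha3, hb3, add_zero]
  zero_mem' := by
    refine ⟨by simp, by simp, ?_⟩
    simp
  smul_mem' := by
    rintro q a ⟨ha1, ha2, ha3⟩
    refine ⟨by simp [Matrix.transpose_smul, ha1], by simp [Matrix.transpose_smul, ha2], ?_⟩
    have key : mapQC g (q • a).1 - mapQC g (q • a).2.1 * τ + τᵀ * (mapQC g (q • a).2.1)ᵀ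
        + τᵀ * mapQC g (q • a).2.2 * τ
        = q • (mapQC g a.1 - mapQC g a.2.1 * τ + τᵀ * (mapQC g a.2.1)ᵀ
          + τᵀ * mapQC g a.2.2 * τ) := by
      simp only [Prod.smul_fst, Prod.smul_snd, _root_.map_smul, Matrix.transpose_smul,
        smul_mul_assoc, mul_smul_comm]
      module
    rw [key, ha3, smul_zero]

/-- The Picard number `ρ(τ) = dim_ℚ N(τ)` of the complex torus `X_τ`. -/
def picard (g : ℕ) (τ : Matrix (Fin g) (Fin g) ℂ) : ℕ :=
  Module.finrank ℚ (NSSpace g τ)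


namespace PicardAux

variable (g : ℕ) (τ : Matrix (Fin g) (Fin g) ℂ)

/-- Index type for strictly upper triangular positions: `⟨j, i⟩` encodes `(i, j)` with `i < j`. -/
abbrev Idx := Σ j : Fin g, Fin (j : ℕ)

lemma card_Idx : Fintype.card (Idx g) * 2 = g * (g - 1) := by
  rw [Fintype.card_sigma]
  simp only [Fintype.card_fin]
  rw [Fin.sum_univ_eq_sum_range (fun i => i) g]
  exact Finset.sum_range_id_mul_two g

def skewFun (a : Idx g → ℚ) : Matrix (Fin g) (Fin g) ℚ :=
  Matrix.of fun r c =>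
    if h : (r : ℕ) < (c : ℕ) then a ⟨c, ⟨r, h⟩⟩
    else if h' : (c : ℕ) < (r : ℕ) then -a ⟨r, ⟨c, h'⟩⟩ else 0

def skewL : (Idx g → ℚ) →ₗ[ℚ] Matrix (Fin g) (Fin g) ℚ where
  toFun := skewFun g
  map_add' a b := by
    ext r c
    simp only [skewFun, Matrix.of_apply, Matrix.add_apply, Pi.add_apply]
    split_ifs <;> ring
  map_smul' q a := by
    ext r c
    simp only [skewFun, Matrix.of_apply, Matrix.smul_apply, Pi.smul_apply, RingHom.id_apply,
      smul_eq_mul]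
    split_ifs <;> ring

lemma skewL_transpose (a : Idx g → ℚ) : (skewL g a)ᵀ = -(skewL g a) := by
  ext r c
  simp only [skewL, skewFun, LinearMap.coe_mk, AddHom.coe_mk, Matrix.transpose_apply,
    Matrix.neg_apply, Matrix.of_apply]
  split_ifs <;> first | (exfalso; omega) | rfl | ring

lemma skewL_inj : Function.Injective (skewL g) := by
  intro a b hab
  funext p
  obtain ⟨j, i⟩ := p
  have h := congrFun (congrFun hab ⟨(i : ℕ), lt_trans i.isLt j.isLt⟩) j
  have hi : (⟨(i : ℕ), lt_trans i.isLt j.isLt⟩ : Fin g) < j := i.isLt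
  simpa [skewL, skewFun, hi] using h

/-- `τ` as a matrix over the entry field. -/
def tauF : Matrix (Fin g) (Fin g) (EntryField g τ) :=
  Matrix.of fun i j => ⟨τ i j, IntermediateField.subset_adjoin ℚ _ ⟨i, j, rfl⟩⟩

/-- Entrywise inclusion `ℚ → F_τ` on matrices. -/
def mapQF : Matrix (Fin g) (Fin g) ℚ →ₐ[ℚ] Matrix (Fin g) (Fin g) (EntryField g τ) :=
  (Algebra.ofId ℚ (EntryField g τ)).mapMatrix

/-- The defining expression of `NSSpace`, computed over the entry field. -/
def EFlin : (Matrix (Fin g) (Fin g) ℚ × Matrix (Fin g) (Fin g) ℚ × Matrix (Fin g) (Fin g) ℚ)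
    →ₗ[ℚ] Matrix (Fin g) (Fin g) (EntryField g τ) where
  toFun x := mapQF g τ x.1 - mapQF g τ x.2.1 * tauF g τ + (tauF g τ)ᵀ * (mapQF g τ x.2.1)ᵀ
    + (tauF g τ)ᵀ * mapQF g τ x.2.2 * tauF g τ
  map_add' a b := by
    simp only [Prod.fst_add, Prod.snd_add, map_add, Matrix.add_mul, Matrix.mul_add,
      Matrix.transpose_add]
    abel
  map_smul' q a := by
    simp only [Prod.smul_fst, Prod.smul_snd, _root_.map_smul, Matrix.transpose_smul,
      smul_mul_assoc, mul_smul_comm, RingHom.id_apply]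
    module

def toTriple : ((Idx g → ℚ) × Matrix (Fin g) (Fin g) ℚ × (Idx g → ℚ)) →ₗ[ℚ]
    (Matrix (Fin g) (Fin g) ℚ × Matrix (Fin g) (Fin g) ℚ × Matrix (Fin g) (Fin g) ℚ) :=
  (skewL g).prodMap (LinearMap.prodMap LinearMap.id (skewL g))

lemma toTriple_inj : Function.Injective (toTriple g) := by
  intro x y h
  obtain ⟨a, b, c⟩ := x
  obtain ⟨a', b', c'⟩ := y
  simp only [toTriple, LinearMap.prodMap_apply, LinearMap.id_apply, Prod.mk.injEq] at h
  exact Prod.ext (skewL_inj g h.1) (Prod.ext h.2.1 (skewL_inj g h.2.2))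

def Psi : ((Idx g → ℚ) × Matrix (Fin g) (Fin g) ℚ × (Idx g → ℚ)) →ₗ[ℚ]
    Matrix (Fin g) (Fin g) (EntryField g τ) :=
  (EFlin g τ).comp (toTriple g)

/-- Skew-symmetric matrices over the entry field, as a ℚ-submodule. -/
def skewSub : Submodule ℚ (Matrix (Fin g) (Fin g) (EntryField g τ)) where
  carrier := {M | Mᵀ = -M}
  add_mem' := fun {a b} ha hb => by
    simp only [Set.mem_setOf_eq] at *
    rw [Matrix.transpose_add, ha, hb, neg_add]
  zero_mem' := by simp
  smul_mem' := fun q a ha => by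
    simp only [Set.mem_setOf_eq] at *
    rw [Matrix.transpose_smul, ha, smul_neg]

lemma EFlin_skew (x : Matrix (Fin g) (Fin g) ℚ × Matrix (Fin g) (Fin g) ℚ ×
      Matrix (Fin g) (Fin g) ℚ) (h1 : x.1ᵀ = -x.1) (h2 : x.2.2ᵀ = -x.2.2) :
    (EFlin g τ x)ᵀ = -(EFlin g τ x) := by
  have hm : ∀ A : Matrix (Fin g) (Fin g) ℚ, (mapQF g τ A)ᵀ = mapQF g τ Aᵀ := by
    intro A
    simp [mapQF, AlgHom.mapMatrix_apply, Matrix.transpose_map]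
  simp only [EFlin, LinearMap.coe_mk, AddHom.coe_mk]
  rw [Matrix.transpose_add, Matrix.transpose_add, Matrix.transpose_sub, Matrix.transpose_mul,
    Matrix.transpose_mul, Matrix.transpose_mul, Matrix.transpose_mul, Matrix.transpose_transpose,
    hm x.1, hm x.2.2, h1, h2, map_neg, map_neg]
  simp only [Matrix.neg_mul, Matrix.mul_neg, ← Matrix.mul_assoc]
  abel

def pickL : Matrix (Fin g) (Fin g) (EntryField g τ) →ₗ[ℚ] (Idx g → EntryField g τ) where
  toFun M p := M ⟨((p.2 : ℕ)), lt_trans p.2.isLt p.1.isLt⟩ p.1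
  map_add' _ _ := rfl
  map_smul' _ _ := rfl

lemma skew_eq_zero (M : Matrix (Fin g) (Fin g) (EntryField g τ)) (hM : Mᵀ = -M)
    (h : pickL g τ M = 0) : M = 0 := by
  haveI : CharZero (EntryField g τ) :=
    charZero_of_injective_algebraMap (algebraMap ℚ (EntryField g τ)).injective
  have key : ∀ i j : Fin g, (i : ℕ) < (j : ℕ) → M i j = 0 := by
    intro i j hij
    have h' := congrFun h ⟨j, ⟨(i : ℕ), hij⟩⟩
    exact h'
  ext i j
  rcases lt_trichotomy (i : ℕ) (j : ℕ) with h1 | h1 | h1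
  · simpa using key i j h1
  · have hij : i = j := Fin.ext h1
    subst hij
    have hd := congrFun (congrFun hM i) i
    simp only [Matrix.transpose_apply, Matrix.neg_apply] at hd
    simpa using CharZero.eq_neg_self_iff.mp hd
  · have hd := congrFun (congrFun hM j) i
    simp only [Matrix.transpose_apply, Matrix.neg_apply] at hd
    rw [Matrix.zero_apply, hd, key j i h1, neg_zero]

lemma EFlin_map (x : Matrix (Fin g) (Fin g) ℚ × Matrix (Fin g) (Fin g) ℚ ×
      Matrix (Fin g) (Fin g) ℚ) :
    mapQC g x.1 - mapQC g x.2.1 * τ + τᵀ * (mapQC g x.2.1)ᵀ + τᵀ * mapQC g x.2.2 * τ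
      = (RingHom.mapMatrix (algebraMap (EntryField g τ) ℂ)) (EFlin g τ x) := by
  set φ := (RingHom.mapMatrix (algebraMap (EntryField g τ) ℂ) :
    Matrix (Fin g) (Fin g) (EntryField g τ) →+* Matrix (Fin g) (Fin g) ℂ) with hφ
  have ht : ∀ M : Matrix (Fin g) (Fin g) (EntryField g τ), φ Mᵀ = (φ M)ᵀ := by
    intro M
    simp [hφ, RingHom.mapMatrix_apply, Matrix.transpose_map]
  have hτ : φ (tauF g τ) = τ := by
    ext i j
    rfl
  have hm : ∀ A : Matrix (Fin g) (Fin g) ℚ, φ (mapQF g τ A) = mapQC g A := by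
    intro A
    ext i j
    simp [hφ, mapQF, mapQC, AlgHom.mapMatrix_apply, RingHom.mapMatrix_apply, Matrix.map_apply,
      Algebra.ofId_apply, ← IsScalarTower.algebraMap_apply]
  simp only [EFlin, LinearMap.coe_mk, AddHom.coe_mk, map_add, map_sub, _root_.map_mul, ht, hτ, hm]

lemma toTriple_mem (p : (Idx g → ℚ) × Matrix (Fin g) (Fin g) ℚ × (Idx g → ℚ))
    (hp : Psi g τ p = 0) : toTriple g p ∈ NSSpace g τ := by
  refine ⟨skewL_transpose g p.1, skewL_transpose g p.2.2, ?_⟩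
  have h0 : EFlin g τ (toTriple g p) = 0 := hp
  rw [EFlin_map g τ (toTriple g p), h0, map_zero]

end PicardAux

theorem picard_ge_dim_of_deg_le_four
    (g : ℕ) (hg : 1 ≤ g) (τ : Matrix (Fin g) (Fin g) ℂ)
    (him : (τ.map Complex.im).det ≠ 0)
    (hfin : FiniteDimensional ℚ (EntryField g τ))
    (hdeg : Module.finrank ℚ (EntryField g τ) ≤ 4) :
    g ≤ picard g τ := by
  classical
  haveI : Module.Finite ℚ (EntryField g τ) := hfin
  set Ψ := PicardAux.Psi g τ with hΨ
  -- rank-nullity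
  have hrn := LinearMap.finrank_range_add_finrank_ker Ψ
  have hdom : finrank ℚ ((PicardAux.Idx g → ℚ) × Matrix (Fin g) (Fin g) ℚ ×
      (PicardAux.Idx g → ℚ))
      = Fintype.card (PicardAux.Idx g) + (g * g + Fintype.card (PicardAux.Idx g)) := by
    rw [Module.finrank_prod, Module.finrank_prod, Module.finrank_pi, Module.finrank_matrix]
    simp
  -- the range lands in skew matrices over the entry field
  have hle : LinearMap.range Ψ ≤ PicardAux.skewSub g τ := by
    rintro _ ⟨p, rfl⟩
    exact PicardAux.EFlin_skew g τ (PicardAux.toTriple g p)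
      (PicardAux.skewL_transpose g p.1) (PicardAux.skewL_transpose g p.2.2)
  have h1 : finrank ℚ (LinearMap.range Ψ) ≤ finrank ℚ (PicardAux.skewSub g τ) :=
    Submodule.finrank_mono hle
  -- skew matrices inject into upper-triangular data
  have hinj : Function.Injective ((PicardAux.pickL g τ).domRestrict (PicardAux.skewSub g τ)) := by
    rw [← LinearMap.ker_eq_bot, eq_bot_iff]
    rintro ⟨M, hM⟩ hker
    have hM0 : M = 0 := PicardAux.skew_eq_zero g τ M hM
      (by simpa [LinearMap.domRestrict_apply] using hker)
    rw [Submodule.mem_bot]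
    exact Subtype.ext hM0
  have h2 : finrank ℚ (PicardAux.skewSub g τ) ≤
      finrank ℚ (PicardAux.Idx g → EntryField g τ) :=
    LinearMap.finrank_le_finrank_of_injective hinj
  have h3 : finrank ℚ (PicardAux.Idx g → EntryField g τ)
      = Fintype.card (PicardAux.Idx g) * finrank ℚ (EntryField g τ) := by
    rw [Module.finrank_pi_fintype]
    simp [Finset.sum_const, Finset.card_univ, mul_comm]
  have hr4 : finrank ℚ (LinearMap.range Ψ) ≤ Fintype.card (PicardAux.Idx g) * 4 := by
    refine le_trans (le_trans h1 h2) ?_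
    rw [h3]
    exact Nat.mul_le_mul_left _ hdeg
  -- the kernel injects into NSSpace
  have hker_le : finrank ℚ (LinearMap.ker Ψ) ≤ picard g τ := by
    let f : (LinearMap.ker Ψ) →ₗ[ℚ] (NSSpace g τ) :=
      LinearMap.codRestrict _ ((PicardAux.toTriple g).comp (LinearMap.ker Ψ).subtype)
        (fun c => PicardAux.toTriple_mem g τ c.1 c.2)
    have hfinj : Function.Injective f := by
      intro x y hxy
      have h := congrArg Subtype.val hxy
      exact Subtype.ext (PicardAux.toTriple_inj g h)
    exact LinearMap.finrank_le_finrank_of_injective hfinj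
  -- arithmetic
  have hcard := PicardAux.card_Idx g
  have hgg : g * (g - 1) + g = g * g := by
    have h' : g - 1 + 1 = g := Nat.succ_pred_eq_of_pos hg
    calc g * (g - 1) + g = g * (g - 1 + 1) := (Nat.mul_succ g (g - 1)).symm
    _ = g * g := by rw [h']
  have hsg : Fintype.card (PicardAux.Idx g) * 2 + g = g * g := by rw [hcard, hgg]
  rw [hdom, ← hsg] at hrn
  omega

end
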